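/- Suppose H_n = [[u_n, w_n],[w_n, v_n]] are 2×2 symmetric positive semidefinite matrices with u_n, v_n ≥ 0, w_n = sqrt(u_n v_n) cos θ_n, and liminf_n sin²θ_n = α > 0. Then λ_min(H_n) → ∞ if and only if min(u_n, v_n) → ∞. -/

import Mathlib

open Filter Matrix

lemma my_trace_eq_sum_eig {A : Matrix (Fin 2) (Fin 2) ℝ} (hA : A.IsHermitian) :
    A.trace = ∑ i, hA.eigenvalues i := by
  nth_rewrite 1 [hA.spectral_theorem]
  rw [Unitary.conjStarAlgAut_apply, Matrix.trace_mul_comm, ← Matrix.mul_assoc]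
  have h1 : (star (hA.eigenvectorUnitary : Matrix (Fin 2) (Fin 2) ℝ)) *
      (hA.eigenvectorUnitary : Matrix (Fin 2) (Fin 2) ℝ) = 1 :=
    Unitary.coe_star_mul_self _
  rw [h1, one_mul, Matrix.trace_diagonal]
  simp [RCLike.ofReal]

lemma my_min_helper1 (a b u v s : ℝ) (ha : 0 ≤ a) (hb : 0 ≤ b) (hu : 0 ≤ u) (hv : 0 ≤ v)
    (hs : s ≤ 1) (hsum : a + b = u + v) (hprod : a * b = u * v * s) :
    min a b ≤ min u v := by
  by_contra h
  push_neg at h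
  have huv : u * v * s ≤ u * v := by
    nlinarith [mul_nonneg hu hv]
  rcases le_total u v with h2 | h2
  · have h4 : u < b := (min_eq_left h2 ▸ h).trans_le (min_le_right a b)
    have h5 : u < a := (min_eq_left h2 ▸ h).trans_le (min_le_left a b)
    nlinarith [mul_pos (sub_pos.2 h5) (sub_pos.2 h4)]
  · have h4 : v < b := (min_eq_right h2 ▸ h).trans_le (min_le_right a b)
    have h5 : v < a := (min_eq_right h2 ▸ h).trans_le (min_le_left a b)
    nlinarith [mul_pos (sub_pos.2 h5) (sub_pos.2 h4)]

lemma my_min_helper2 (a b u v s α : ℝ) (ha : 0 ≤ a) (hb : 0 ≤ b) (hu : 0 ≤ u) (hv : 0 ≤ v)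
    (hα : 0 < α) (hs : α / 2 < s) (hmin : 1 ≤ min u v)
    (hsum : a + b = u + v) (hprod : a * b = u * v * s) :
    α / 4 * min u v ≤ min a b := by
  have hu1 : 1 ≤ u := le_trans hmin (min_le_left u v)
  have hv1 : 1 ≤ v := le_trans hmin (min_le_right u v)
  have hsums : 0 < u + v := by linarith
  rcases le_total u v with h2 | h2
  · rw [min_eq_left h2]
    rcases le_total a b with h3 | h3
    · rw [min_eq_left h3]
      nlinarith [sq_nonneg a, mul_le_mul_of_nonneg_left hs.le (mul_nonneg hu hv)]
    · rw [min_eq_right h3]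
      nlinarith [sq_nonneg b, mul_le_mul_of_nonneg_left hs.le (mul_nonneg hu hv)]
  · rw [min_eq_right h2]
    rcases le_total a b with h3 | h3
    · rw [min_eq_left h3]
      nlinarith [sq_nonneg a, mul_le_mul_of_nonneg_left hs.le (mul_nonneg hu hv)]
    · rw [min_eq_right h3]
      nlinarith [sq_nonneg b, mul_le_mul_of_nonneg_left hs.le (mul_nonneg hu hv)]

/-- Example 1: for 2×2 symmetric positive semidefinite matrices
`H_n = [[u_n,w_n],[w_n,v_n]]` with `w_n = √(u_n v_n)·cos θ_n` and
`liminf sin²θ_n = α > 0`, one has `λ_min(H_n) → ∞` iff `min(u_n, v_n) → ∞`. -/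
theorem stmt5 (u v w θ : ℕ → ℝ) (hu : ∀ n, 0 ≤ u n) (hv : ∀ n, 0 ≤ v n)
    (hw : ∀ n, w n = Real.sqrt (u n * v n) * Real.cos (θ n))
    (H : ℕ → Matrix (Fin 2) (Fin 2) ℝ)
    (hHdef : ∀ n, H n = Matrix.of ![![u n, w n], ![w n, v n]])
    (hpsd : ∀ n, (H n).PosSemidef)
    (α : ℝ) (hα : 0 < α)
    (hliminf : Filter.liminf (fun n => Real.sin (θ n) ^ 2) atTop = α) :
    Tendsto (fun n => ⨅ i, (hpsd n).1.eigenvalues i) atTop atTop ↔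
      Tendsto (fun n => min (u n) (v n)) atTop atTop := by
  set a : ℕ → ℝ := fun n => (hpsd n).1.eigenvalues 0 with ha_def
  set b : ℕ → ℝ := fun n => (hpsd n).1.eigenvalues 1 with hb_def
  have ha : ∀ n, 0 ≤ a n := fun n => (hpsd n).eigenvalues_nonneg 0
  have hb : ∀ n, 0 ≤ b n := fun n => (hpsd n).eigenvalues_nonneg 1
  have hsum : ∀ n, a n + b n = u n + v n := by
    intro n
    have ht : (H n).trace = u n + v n := by
      rw [hHdef n]; simp [Matrix.trace_fin_two]
    have h2 := my_trace_eq_sum_eig (hpsd n).1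
    rw [Fin.sum_univ_two, ht] at h2
    exact h2.symm
  have hprod : ∀ n, a n * b n = u n * v n * Real.sin (θ n) ^ 2 := by
    intro n
    have hd : (H n).det = u n * v n * Real.sin (θ n) ^ 2 := by
      rw [hHdef n, Matrix.det_fin_two_of, hw n]
      have hs := Real.sq_sqrt (mul_nonneg (hu n) (hv n))
      have hc := Real.sin_sq_add_cos_sq (θ n)
      nlinarith [hs, hc]
    have h2 := (hpsd n).1.det_eq_prod_eigenvalues
    rw [Fin.prod_univ_two, hd] at h2
    simp only [RCLike.ofReal_real_eq_id, id] at h2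
    exact h2.symm
  have hbdd : ∀ n, BddBelow (Set.range fun i => (hpsd n).1.eigenvalues i) :=
    fun n => Set.Finite.bddBelow (Set.finite_range _)
  have hinf_le_a : ∀ n, (⨅ i, (hpsd n).1.eigenvalues i) ≤ a n :=
    fun n => ciInf_le (hbdd n) 0
  have hinf_le_b : ∀ n, (⨅ i, (hpsd n).1.eigenvalues i) ≤ b n :=
    fun n => ciInf_le (hbdd n) 1
  constructor
  · intro hT
    apply tendsto_atTop_mono _ hT
    intro n
    have hsle : Real.sin (θ n) ^ 2 ≤ 1 := Real.sin_sq_le_one _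
    have key := my_min_helper1 (a n) (b n) (u n) (v n) (Real.sin (θ n) ^ 2)
      (ha n) (hb n) (hu n) (hv n) hsle (hsum n) (hprod n)
    exact le_trans (le_min (hinf_le_a n) (hinf_le_b n)) key
  · intro hT
    have hbound : IsBoundedUnder (· ≥ ·) atTop (fun n => Real.sin (θ n) ^ 2) :=
      ⟨0, eventually_map.2 (Eventually.of_forall fun n => sq_nonneg _)⟩
    have hlt : (α / 2 : ℝ) < liminf (fun n => Real.sin (θ n) ^ 2) atTop := by
      rw [hliminf]; linarith
    have ev1 : ∀ᶠ n in atTop, α / 2 < Real.sin (θ n) ^ 2 :=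
      eventually_lt_of_lt_liminf hlt hbound
    have ev2 : ∀ᶠ n in atTop, 1 ≤ min (u n) (v n) := hT.eventually_ge_atTop 1
    have ev : ∀ᶠ n in atTop, α / 4 * min (u n) (v n) ≤ ⨅ i, (hpsd n).1.eigenvalues i := by
      filter_upwards [ev1, ev2] with n h1 h2
      have key := my_min_helper2 (a n) (b n) (u n) (v n) (Real.sin (θ n) ^ 2) α
        (ha n) (hb n) (hu n) (hv n) hα h1 h2 (hsum n) (hprod n)
      apply le_ciInf
      intro i
      fin_cases i
      · exact key.trans (min_le_left _ _)
      · exact key.trans (min_le_right _ _)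
    exact tendsto_atTop_mono' atTop ev (hT.const_mul_atTop (by positivity))
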